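/- arXiv:2407.16627 — 2 statements merged into one kernel-verified Lean document; each statement's English description precedes it below -/
import Mathlib

section
/- For κ > 0 and t ∈ [0,1), let q_κ(t) = P(|Z₀| ≤ κ, |Z_t| ≤ κ) where (Z₀, Z_t) is a centered bivariate Gaussian with unit variances and correlation t. Then q_κ is differentiable on [0,1) with q_κ'(t) = (1/π) · e^{-κ²/2} / √(1−t²) · ( e^{-κ²(1−t)/(2(1+t))} − e^{-κ²(1+t)/(2(1−t))} ). -/
open MeasureTheory ProbabilityTheory
open Real

noncomputable def gpdf (x : ℝ) : ℝ := gaussianPDFReal 0 1 x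

lemma gpdf_eq (x : ℝ) : gpdf x = (Real.sqrt (2 * π))⁻¹ * Real.exp (-x ^ 2 / 2) := by
  simp [gpdf, gaussianPDFReal]
lemma continuous_gpdf : Continuous gpdf := by
  have : gpdf = fun x => (Real.sqrt (2 * π))⁻¹ * Real.exp (-x ^ 2 / 2) := funext gpdf_eq
  rw [this]; fun_prop

lemma gpdf_nonneg (x : ℝ) : 0 ≤ gpdf x := gaussianPDFReal_nonneg 0 1 x

lemma sqrt_two_pi_ge_one : (1:ℝ) ≤ Real.sqrt (2 * π) := by
  rw [show (1:ℝ) = Real.sqrt 1 by simp]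
  exact Real.sqrt_le_sqrt (by nlinarith [Real.pi_gt_three])

lemma gpdf_le_one (x : ℝ) : gpdf x ≤ 1 := by
  rw [gpdf_eq]
  have h1 : Real.exp (-x ^ 2 / 2) ≤ 1 := by
    rw [Real.exp_le_one_iff]; nlinarith [sq_nonneg x]
  have h2 : (Real.sqrt (2 * π))⁻¹ ≤ 1 := by
    rw [inv_le_one_iff₀]; right; exact sqrt_two_pi_ge_one
  nlinarith [Real.exp_nonneg (-x ^ 2 / 2), inv_nonneg.mpr (Real.sqrt_nonneg (2 * π))]

lemma integrable_gpdf : Integrable gpdf := integrable_gaussianPDFReal 0 1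

noncomputable def PhiG (u : ℝ) : ℝ := ∫ y in Set.Iic u, gpdf y

lemma PhiG_nonneg (u : ℝ) : 0 ≤ PhiG u := by
  exact setIntegral_nonneg measurableSet_Iic (fun x _ => gpdf_nonneg x)

lemma PhiG_le_one (u : ℝ) : PhiG u ≤ 1 := by
  have h := integral_gaussianPDFReal_eq_one 0 (one_ne_zero)
  calc PhiG u ≤ ∫ y, gpdf y := by
        apply setIntegral_le_integral integrable_gpdf (ae_of_all _ (fun x => gpdf_nonneg x))
    _ = 1 := h

lemma integral_Icc_gpdf {a b : ℝ} (hab : a ≤ b) :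
    ∫ x in Set.Icc a b, gpdf x = PhiG b - PhiG a := by
  rw [PhiG, PhiG, intervalIntegral.integral_Iic_sub_Iic integrable_gpdf.integrableOn
    integrable_gpdf.integrableOn, intervalIntegral.integral_of_le hab,
    MeasureTheory.integral_Icc_eq_integral_Ioc]

lemma hasDerivAt_PhiG (u : ℝ) : HasDerivAt PhiG (gpdf u) u := by
  have h : ∀ v : ℝ, PhiG v = PhiG 0 + ∫ y in (0:ℝ)..v, gpdf y := by
    intro v
    rw [← intervalIntegral.integral_Iic_sub_Iic integrable_gpdf.integrableOn
      integrable_gpdf.integrableOn]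
    simp only [PhiG]
    ring
  have h2 : HasDerivAt (fun v => PhiG 0 + ∫ y in (0:ℝ)..v, gpdf y) (gpdf u) u := by
    apply HasDerivAt.const_add
    exact intervalIntegral.integral_hasDerivAt_right
      (integrable_gpdf.intervalIntegrable)
      (continuous_gpdf.stronglyMeasurableAtFilter _ _)
      continuous_gpdf.continuousAt
  exact (funext h ▸ h2 : HasDerivAt PhiG (gpdf u) u)

lemma continuous_PhiG : Continuous PhiG := by
  have : Differentiable ℝ PhiG := fun u => (hasDerivAt_PhiG u).differentiableAt
  exact this.continuous


/-- `q κ t = P(|Z₀| ≤ κ, |Z_t| ≤ κ)` where `Z₀ = Z`, `Z_t = tZ + √(1−t²)Z'` with `Z, Z'`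
independent standard Gaussians. -/
noncomputable def qGauss (κ t : ℝ) : ℝ :=
  (((gaussianReal 0 1).prod (gaussianReal 0 1))
    {p : ℝ × ℝ | |p.1| ≤ κ ∧ |t * p.1 + Real.sqrt (1 - t ^ 2) * p.2| ≤ κ}).toReal

noncomputable def bfun (κ t x : ℝ) : ℝ := (κ - t * x) / Real.sqrt (1 - t ^ 2)
noncomputable def afun (κ t x : ℝ) : ℝ := (-κ - t * x) / Real.sqrt (1 - t ^ 2)
noncomputable def Fxt (κ t x : ℝ) : ℝ := gpdf x * (PhiG (bfun κ t x) - PhiG (afun κ t x))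

lemma afun_le_bfun (κ t x : ℝ) (hκ : 0 ≤ κ) : afun κ t x ≤ bfun κ t x := by
  unfold afun bfun
  rcases le_or_gt (Real.sqrt (1 - t ^ 2)) 0 with h | h
  · have := Real.sqrt_nonneg (1 - t ^ 2)
    have hz : Real.sqrt (1 - t ^ 2) = 0 := le_antisymm h this
    simp [hz]
  · gcongr
    linarith

lemma continuous_Fxt (κ t : ℝ) : Continuous (Fxt κ t) := by
  unfold Fxt bfun afun
  exact continuous_gpdf.mul ((continuous_PhiG.comp (by fun_prop)).sub
    (continuous_PhiG.comp (by fun_prop)))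

lemma qGauss_eq (κ : ℝ) (hκ : 0 < κ) (t : ℝ) (ht : t ∈ Set.Ioo (-1:ℝ) 1) :
    qGauss κ t = ∫ x in Set.Icc (-κ) κ, Fxt κ t x := by
  obtain ⟨ht1, ht2⟩ := ht
  set s := Real.sqrt (1 - t ^ 2) with hs_def
  have hs : 0 < s := Real.sqrt_pos.mpr (by nlinarith)
  have hS : MeasurableSet {p : ℝ × ℝ | |p.1| ≤ κ ∧ |t * p.1 + s * p.2| ≤ κ} := by
    apply MeasurableSet.inter
    · exact measurableSet_le (measurable_fst.abs) measurable_const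
    · exact measurableSet_le (((measurable_fst.const_mul t).add
        (measurable_snd.const_mul s)).abs) measurable_const
  have hsec : ∀ x : ℝ, (gaussianReal 0 1) (Prod.mk x ⁻¹'
      {p : ℝ × ℝ | |p.1| ≤ κ ∧ |t * p.1 + s * p.2| ≤ κ})
      = Set.indicator (Set.Icc (-κ) κ)
        (fun x => ENNReal.ofReal (PhiG (bfun κ t x) - PhiG (afun κ t x))) x := by
    intro x
    by_cases hx : |x| ≤ κ
    · have hpre : Prod.mk x ⁻¹' {p : ℝ × ℝ | |p.1| ≤ κ ∧ |t * p.1 + s * p.2| ≤ κ}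
          = Set.Icc (afun κ t x) (bfun κ t x) := by
        ext y
        simp only [Set.mem_preimage, Set.mem_setOf_eq, Set.mem_Icc, abs_le,
          afun, bfun, ← hs_def, div_le_iff₀ hs, le_div_iff₀ hs]
        have hx' := abs_le.mp hx
        constructor
        · rintro ⟨-, h1, h2⟩; constructor <;> nlinarith
        · rintro ⟨h1, h2⟩; exact ⟨hx', by nlinarith, by nlinarith⟩
      rw [hpre, gaussianReal_apply_eq_integral 0 one_ne_zero,
        Set.indicator_of_mem (by rw [Set.mem_Icc]; exact abs_le.mp hx)]
      congr 1
      exact integral_Icc_gpdf (afun_le_bfun κ t x hκ.le)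
    · have hpre : Prod.mk x ⁻¹' {p : ℝ × ℝ | |p.1| ≤ κ ∧ |t * p.1 + s * p.2| ≤ κ} = ∅ := by
        ext y; simp [hx]
      rw [hpre, Set.indicator_of_notMem (by rw [Set.mem_Icc, ← abs_le]; exact hx)]
      simp
  have hGcont : Continuous (fun x => PhiG (bfun κ t x) - PhiG (afun κ t x)) := by
    unfold bfun afun
    exact (continuous_PhiG.comp (by fun_prop)).sub (continuous_PhiG.comp (by fun_prop))
  have hGnn : ∀ x, 0 ≤ PhiG (bfun κ t x) - PhiG (afun κ t x) := by
    intro x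
    rw [← integral_Icc_gpdf (afun_le_bfun κ t x hκ.le)]
    exact setIntegral_nonneg measurableSet_Icc (fun y _ => gpdf_nonneg y)
  rw [qGauss, Measure.prod_apply hS]
  rw [lintegral_congr hsec, lintegral_indicator measurableSet_Icc]
  rw [gaussianReal_of_var_ne_zero 0 one_ne_zero,
    MeasureTheory.setLIntegral_withDensity_eq_setLIntegral_mul _
      (measurable_gaussianPDF 0 1)
      (by exact (ENNReal.measurable_ofReal.comp hGcont.measurable))
      measurableSet_Icc]
  have : ∀ x : ℝ, gaussianPDF 0 1 x * ENNReal.ofReal (PhiG (bfun κ t x) - PhiG (afun κ t x))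
      = ENNReal.ofReal (Fxt κ t x) := by
    intro x
    rw [gaussianPDF, ← ENNReal.ofReal_mul (gaussianPDFReal_nonneg 0 1 x)]
    rfl
  simp only [Pi.mul_apply]
  simp_rw [this]
  have h1 : 0 ≤ᵐ[Measure.restrict ℙ (Set.Icc (-κ) κ)] Fxt κ t :=
    ae_of_all _ (fun x => mul_nonneg (gpdf_nonneg x) (hGnn x))
  exact (integral_eq_lintegral_of_nonneg_ae h1
    ((continuous_Fxt κ t).aestronglyMeasurable.restrict)).symm

lemma hasDerivAt_cdiv (x c : ℝ) {t : ℝ} (ht : t ^ 2 < 1) :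
    HasDerivAt (fun t : ℝ => (c - t * x) / Real.sqrt (1 - t ^ 2))
      ((t * c - x) / (Real.sqrt (1 - t ^ 2)) ^ 3) t := by
  have hpos : 0 < 1 - t ^ 2 := by linarith
  set s := Real.sqrt (1 - t ^ 2) with hs_def
  have hs : 0 < s := Real.sqrt_pos.mpr hpos
  have hs2 : s ^ 2 = 1 - t ^ 2 := Real.sq_sqrt hpos.le
  have h1 : HasDerivAt (fun t : ℝ => 1 - t ^ 2) (-(2 * t)) t := by
    simpa using (hasDerivAt_pow 2 t).const_sub 1
  have h2 : HasDerivAt (fun t : ℝ => Real.sqrt (1 - t ^ 2)) (1 / (2 * s) * -(2 * t)) t :=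
    (Real.hasDerivAt_sqrt hpos.ne').comp t h1
  have h3 : HasDerivAt (fun t : ℝ => c - t * x) (-x) t := by
    simpa using ((hasDerivAt_id t).mul_const x).const_sub c
  have h4 := h3.div h2 hs.ne'
  convert h4 using 1
  · rfl
  · rfl
  · rfl
  rw [← hs_def]
  field_simp
  ring_nf
  linear_combination x * hs2

noncomputable def Fxt' (κ t x : ℝ) : ℝ :=
  gpdf x * (gpdf (bfun κ t x) * ((t * κ - x) / (Real.sqrt (1 - t ^ 2)) ^ 3)
    - gpdf (afun κ t x) * ((t * (-κ) - x) / (Real.sqrt (1 - t ^ 2)) ^ 3))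

lemma hasDerivAt_Fxt (κ x : ℝ) {t : ℝ} (ht : t ^ 2 < 1) :
    HasDerivAt (fun t => Fxt κ t x) (Fxt' κ t x) t := by
  have hb : HasDerivAt (fun t => bfun κ t x)
      ((t * κ - x) / (Real.sqrt (1 - t ^ 2)) ^ 3) t := hasDerivAt_cdiv x κ ht
  have ha : HasDerivAt (fun t => afun κ t x)
      ((t * (-κ) - x) / (Real.sqrt (1 - t ^ 2)) ^ 3) t := hasDerivAt_cdiv x (-κ) ht
  have hPb := (hasDerivAt_PhiG (bfun κ t x)).comp t hb
  have hPa := (hasDerivAt_PhiG (afun κ t x)).comp t ha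
  exact ((hPb.sub hPa).const_mul (gpdf x))

lemma gpdf_mul (c x : ℝ) {t : ℝ} (ht : t ^ 2 < 1) :
    gpdf x * gpdf ((c - t * x) / Real.sqrt (1 - t ^ 2))
      = (2 * π)⁻¹ * Real.exp (-c ^ 2 / 2) *
        Real.exp (-((x - t * c) / Real.sqrt (1 - t ^ 2)) ^ 2 / 2) := by
  have hpos : 0 < 1 - t ^ 2 := by linarith
  set s := Real.sqrt (1 - t ^ 2) with hs_def
  have hs : 0 < s := Real.sqrt_pos.mpr hpos
  have hs2 : s ^ 2 = 1 - t ^ 2 := Real.sq_sqrt hpos.le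
  rw [gpdf_eq, gpdf_eq]
  have hc : (Real.sqrt (2 * π))⁻¹ * (Real.sqrt (2 * π))⁻¹ = (2 * π)⁻¹ := by
    rw [← mul_inv, Real.mul_self_sqrt (by positivity)]
  have hexp : -x ^ 2 / 2 + -(((c - t * x) / s) ^ 2) / 2
      = -c ^ 2 / 2 + -(((x - t * c) / s) ^ 2) / 2 := by
    field_simp
    ring_nf
    linear_combination (c^2 - x^2) * hs2
  calc (Real.sqrt (2*π))⁻¹ * Real.exp (-x ^ 2 / 2) *
        ((Real.sqrt (2*π))⁻¹ * Real.exp (-(((c - t * x) / s) ^ 2) / 2))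
      = (Real.sqrt (2*π))⁻¹ * (Real.sqrt (2*π))⁻¹ *
        Real.exp (-x ^ 2 / 2 + -(((c - t * x) / s) ^ 2) / 2) := by
        rw [Real.exp_add]; ring
    _ = (2 * π)⁻¹ * (Real.exp (-c ^ 2 / 2) * Real.exp (-(((x - t * c) / s) ^ 2) / 2)) := by
        rw [hc, hexp, Real.exp_add]
    _ = (2 * π)⁻¹ * Real.exp (-c ^ 2 / 2) * Real.exp (-((x - t * c) / s) ^ 2 / 2) := by
        ring_nf

noncomputable def gfun (κ t x : ℝ) : ℝ :=
  (2 * π)⁻¹ * Real.exp (-κ ^ 2 / 2) / Real.sqrt (1 - t ^ 2) *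
    (Real.exp (-((x - t * κ) / Real.sqrt (1 - t ^ 2)) ^ 2 / 2)
      - Real.exp (-((x - t * (-κ)) / Real.sqrt (1 - t ^ 2)) ^ 2 / 2))

lemma hasDerivAt_gfun (κ : ℝ) {t : ℝ} (ht : t ^ 2 < 1) (x : ℝ) :
    HasDerivAt (fun x => gfun κ t x) (Fxt' κ t x) x := by
  have hpos : 0 < 1 - t ^ 2 := by linarith
  set s := Real.sqrt (1 - t ^ 2) with hs_def
  have hs : 0 < s := Real.sqrt_pos.mpr hpos
  have hexp : ∀ a : ℝ, HasDerivAt (fun x : ℝ => Real.exp (-((x - a) / s) ^ 2 / 2))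
      (Real.exp (-((x - a) / s) ^ 2 / 2) * (-(2 * ((x - a) / s) * (1 / s)) / 2)) x := by
    intro a
    have hi : HasDerivAt (fun x : ℝ => -((x - a) / s) ^ 2 / 2)
        (-(2 * ((x - a) / s) * (1 / s)) / 2) x := by
      have h1 : HasDerivAt (fun x : ℝ => (x - a) / s) (1 / s) x := by
        simpa using ((hasDerivAt_id x).sub_const a).div_const s
      have h2 := (h1.pow 2).neg.div_const 2
      simpa using h2
    exact hi.exp
  have hD := ((hexp (t * κ)).sub (hexp (t * (-κ)))).const_mul
    ((2 * π)⁻¹ * Real.exp (-κ ^ 2 / 2) / s)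
  convert hD using 1
  · rfl
  · rfl
  · rfl
  have h1 := gpdf_mul κ x ht
  have h2 := gpdf_mul (-κ) x ht
  rw [neg_sq] at h2
  rw [← hs_def] at h1 h2
  simp only [Fxt', bfun, afun, ← hs_def]
  have hb : (-κ : ℝ) - t * x = -κ - t * x := rfl
  calc gpdf x * (gpdf ((κ - t * x) / s) * ((t * κ - x) / s ^ 3)
        - gpdf ((-κ - t * x) / s) * ((t * (-κ) - x) / s ^ 3))
      = (gpdf x * gpdf ((κ - t * x) / s)) * ((t * κ - x) / s ^ 3)
        - (gpdf x * gpdf ((-κ - t * x) / s)) * ((t * (-κ) - x) / s ^ 3) := by ring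
    _ = _ := by
        rw [h1, show (-κ : ℝ) - t * x = -κ - t * x from rfl]
        rw [h2]
        field_simp
        ring

lemma continuous_Fxt' (κ t : ℝ) : Continuous (Fxt' κ t) := by
  unfold Fxt' bfun afun
  apply continuous_gpdf.mul
  apply Continuous.sub
  · exact ((continuous_gpdf.comp (by fun_prop)).mul (by fun_prop))
  · exact ((continuous_gpdf.comp (by fun_prop)).mul (by fun_prop))

lemma integral_Fxt' (κ : ℝ) (hκ : 0 < κ) {t : ℝ} (ht0 : 0 ≤ t) (ht1 : t < 1) :
    ∫ x in Set.Icc (-κ) κ, Fxt' κ t x =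
      (1 / Real.pi) * Real.exp (-κ ^ 2 / 2) / Real.sqrt (1 - t ^ 2) *
        (Real.exp (-κ ^ 2 * (1 - t) / (2 * (1 + t))) -
          Real.exp (-κ ^ 2 * (1 + t) / (2 * (1 - t)))) := by
  have ht : t ^ 2 < 1 := by nlinarith
  have hpos : 0 < 1 - t ^ 2 := by linarith
  set s := Real.sqrt (1 - t ^ 2) with hs_def
  have hs : 0 < s := Real.sqrt_pos.mpr hpos
  have hs2 : s ^ 2 = 1 - t ^ 2 := Real.sq_sqrt hpos.le
  have key := intervalIntegral.integral_eq_sub_of_hasDerivAt (a := -κ) (b := κ)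
    (f := fun x => gfun κ t x) (f' := fun x => Fxt' κ t x)
    (fun x _ => hasDerivAt_gfun κ ht x) ((continuous_Fxt' κ t).intervalIntegrable _ _)
  rw [MeasureTheory.integral_Icc_eq_integral_Ioc,
    ← intervalIntegral.integral_of_le (by linarith : -κ ≤ κ), key]
  have h1t : (1 : ℝ) + t ≠ 0 := by linarith
  have h1t' : (1 : ℝ) - t ≠ 0 := by linarith
  have e1 : -((κ - t * κ) / s) ^ 2 / 2 = -κ ^ 2 * (1 - t) / (2 * (1 + t)) := by
    rw [div_pow, hs2]; field_simp; ring
  have e2 : -((κ - t * (-κ)) / s) ^ 2 / 2 = -κ ^ 2 * (1 + t) / (2 * (1 - t)) := by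
    rw [div_pow, hs2]; field_simp; ring
  have e3 : -((-κ - t * κ) / s) ^ 2 / 2 = -κ ^ 2 * (1 + t) / (2 * (1 - t)) := by
    rw [div_pow, hs2]; field_simp; ring
  have e4 : -((-κ - t * (-κ)) / s) ^ 2 / 2 = -κ ^ 2 * (1 - t) / (2 * (1 + t)) := by
    rw [div_pow, hs2]; field_simp; ring
  simp only [gfun, ← hs_def, e1, e2, e3, e4]
  have hπ : (0:ℝ) < π := Real.pi_pos
  field_simp
  ring


/-- For `κ > 0`, the map `t ↦ q_κ(t)` is differentiable on `[0,1)` with derivative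
`(1/π)·e^{-κ²/2}/√(1−t²)·(e^{-κ²(1−t)/(2(1+t))} − e^{-κ²(1+t)/(2(1−t))})`. -/
theorem stmt2 (κ : ℝ) (hκ : 0 < κ) :
    ∀ t ∈ Set.Ico (0 : ℝ) 1,
      HasDerivAt (qGauss κ)
        ((1 / Real.pi) * Real.exp (-κ ^ 2 / 2) / Real.sqrt (1 - t ^ 2) *
          (Real.exp (-κ ^ 2 * (1 - t) / (2 * (1 + t))) -
            Real.exp (-κ ^ 2 * (1 + t) / (2 * (1 - t))))) t := by
  rintro t ⟨ht0, ht1⟩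
  have ht : t ^ 2 < 1 := by nlinarith
  set ε := (1 - t) / 2 with hε_def
  have hε : 0 < ε := by simp only [hε_def]; linarith
  -- bounds for t' in the ball
  have hball : ∀ t' ∈ Metric.ball t ε, t' ^ 2 ≤ ((1 + t) / 2) ^ 2 ∧ t' ^ 2 < 1 := by
    intro t' ht'
    rw [Metric.mem_ball, Real.dist_eq, abs_lt] at ht'
    constructor <;> nlinarith [ht'.1, ht'.2]
  set s₀ := Real.sqrt (1 - ((1 + t) / 2) ^ 2) with hs₀_def
  have hs₀pos : 0 < s₀ := Real.sqrt_pos.mpr (by nlinarith)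
  set μ := volume.restrict (Set.Icc (-κ) κ) with hμ_def
  have h_int : Integrable (Fxt κ t) μ :=
    ((continuous_Fxt κ t).integrableOn_Icc)
  have h_meas : ∀ᶠ t' in nhds t, AEStronglyMeasurable (Fxt κ t') μ :=
    Filter.Eventually.of_forall fun t' => (continuous_Fxt κ t').aestronglyMeasurable.restrict
  have h_meas' : AEStronglyMeasurable (Fxt' κ t) μ :=
    (continuous_Fxt' κ t).aestronglyMeasurable.restrict
  have h_bound : ∀ᵐ x ∂μ, ∀ t' ∈ Metric.ball t ε, ‖Fxt' κ t' x‖ ≤ 4 * κ / s₀ ^ 3 := by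
    filter_upwards [ae_restrict_mem measurableSet_Icc] with x hx
    intro t' ht'
    obtain ⟨ht'2, ht'1⟩ := hball t' ht'
    have hx' : |x| ≤ κ := abs_le.mpr ⟨hx.1, hx.2⟩
    set s' := Real.sqrt (1 - t' ^ 2) with hs'_def
    have hs'pos : 0 < s' := Real.sqrt_pos.mpr (by linarith)
    have hs's₀ : s₀ ≤ s' := Real.sqrt_le_sqrt (by nlinarith)
    have habs_t' : |t'| ≤ 1 := abs_le.mpr ⟨by nlinarith, by nlinarith⟩
    have ht'bd := abs_le.mp habs_t'
    have hxbd := abs_le.mp hx'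
    have hnum1 : |t' * κ - x| ≤ 2 * κ :=
      abs_le.mpr ⟨by nlinarith, by nlinarith⟩
    have hnum2 : |t' * (-κ) - x| ≤ 2 * κ :=
      abs_le.mpr ⟨by nlinarith, by nlinarith⟩
    have hs'3 : s₀ ^ 3 ≤ s' ^ 3 := pow_le_pow_left₀ hs₀pos.le hs's₀ 3
    have hu : |(t' * κ - x) / s' ^ 3| ≤ 2 * κ / s₀ ^ 3 := by
      rw [abs_div, abs_of_pos (pow_pos hs'pos 3)]
      exact div_le_div₀ (by positivity) hnum1 (by positivity) hs'3
    have hv : |(t' * (-κ) - x) / s' ^ 3| ≤ 2 * κ / s₀ ^ 3 := by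
      rw [abs_div, abs_of_pos (pow_pos hs'pos 3)]
      exact div_le_div₀ (by positivity) hnum2 (by positivity) hs'3
    have hgb : |gpdf (bfun κ t' x)| ≤ 1 := by
      rw [abs_of_nonneg (gpdf_nonneg _)]; exact gpdf_le_one _
    have hga : |gpdf (afun κ t' x)| ≤ 1 := by
      rw [abs_of_nonneg (gpdf_nonneg _)]; exact gpdf_le_one _
    simp only [Real.norm_eq_abs, Fxt', ← hs'_def]
    calc |gpdf x * (gpdf (bfun κ t' x) * ((t' * κ - x) / s' ^ 3)
            - gpdf (afun κ t' x) * ((t' * (-κ) - x) / s' ^ 3))|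
        ≤ |gpdf (bfun κ t' x) * ((t' * κ - x) / s' ^ 3)
            - gpdf (afun κ t' x) * ((t' * (-κ) - x) / s' ^ 3)| := by
          rw [abs_mul]
          exact mul_le_of_le_one_left (abs_nonneg _)
            (by rw [abs_of_nonneg (gpdf_nonneg x)]; exact gpdf_le_one x)
      _ ≤ |gpdf (bfun κ t' x) * ((t' * κ - x) / s' ^ 3)|
            + |gpdf (afun κ t' x) * ((t' * (-κ) - x) / s' ^ 3)| := abs_sub _ _
      _ ≤ 1 * (2 * κ / s₀ ^ 3) + 1 * (2 * κ / s₀ ^ 3) := by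
          rw [abs_mul, abs_mul]
          gcongr <;> first | assumption | positivity
      _ = 4 * κ / s₀ ^ 3 := by ring
  have h_bd_int : Integrable (fun _ : ℝ => 4 * κ / s₀ ^ 3) μ := by
    rw [hμ_def]
    exact integrableOn_const measure_Icc_lt_top.ne
  have h_diff : ∀ᵐ x ∂μ, ∀ t' ∈ Metric.ball t ε, HasDerivAt (fun t' => Fxt κ t' x) (Fxt' κ t' x) t' := by
    filter_upwards with x
    intro t' ht'
    exact hasDerivAt_Fxt κ x (hball t' ht').2
  obtain ⟨-, hderiv⟩ := hasDerivAt_integral_of_dominated_loc_of_deriv_le (Metric.ball_mem_nhds t hε) h_meas h_int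
    h_meas' h_bound h_bd_int h_diff
  rw [show (∫ x, Fxt' κ t x ∂μ) = ∫ x in Set.Icc (-κ) κ, Fxt' κ t x from rfl,
    integral_Fxt' κ hκ ht0 ht1] at hderiv
  have hq : qGauss κ =ᶠ[nhds t] fun t' => ∫ x, Fxt κ t' x ∂μ := by
    have hmem : Set.Ioo (-1 : ℝ) 1 ∈ nhds t := isOpen_Ioo.mem_nhds ⟨by linarith, ht1⟩
    filter_upwards [hmem] with t' ht'
    exact qGauss_eq κ hκ t' ht'
  exact hderiv.congr_of_eventuallyEq hq
end

section
/- For κ > 0, the map t ↦ q_κ(t) = P(|Z₀| ≤ κ, |Z_t| ≤ κ), where (Z₀, Z_t) is a centered bivariate Gaussian pair with unit variances and correlation t, is non-decreasing on [0,1). -/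
open MeasureTheory ProbabilityTheory

namespace QGaussAux

open Real intervalIntegral

lemma pdf_eq (x : ℝ) : gaussianPDFReal 0 1 x = (Real.sqrt (2*π))⁻¹ * Real.exp (-x^2/2) := by
  simp [gaussianPDFReal]

lemma pdf_le_one (x : ℝ) : gaussianPDFReal 0 1 x ≤ 1 := by
  rw [pdf_eq]
  have h1 : (1:ℝ) ≤ Real.sqrt (2*π) := by
    rw [show (1:ℝ) = Real.sqrt 1 by simp]
    exact Real.sqrt_le_sqrt (by nlinarith [Real.pi_gt_three])
  have h2 : Real.exp (-x^2/2) ≤ 1 := by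
    rw [Real.exp_le_one_iff]; nlinarith [sq_nonneg x]
  calc (Real.sqrt (2*π))⁻¹ * Real.exp (-x^2/2) ≤ 1 * 1 := by
        apply mul_le_mul _ h2 (Real.exp_nonneg _) zero_le_one
        exact inv_le_one_of_one_le₀ h1
    _ = 1 := by ring

lemma pdf_cont : Continuous (gaussianPDFReal 0 1) := by
  rw [gaussianPDFReal_def]
  fun_prop

lemma pdf_intInt (a b : ℝ) : IntervalIntegrable (gaussianPDFReal 0 1) volume a b :=
  (integrable_gaussianPDFReal 0 1).intervalIntegrable

lemma sliceA {κ c σ : ℝ} (hκ : 0 ≤ κ) (hσ : 0 < σ) :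
    (gaussianReal 0 1 {y : ℝ | |c + σ * y| ≤ κ}).toReal
      = ∫ u in ((-κ - c)/σ)..((κ - c)/σ), gaussianPDFReal 0 1 u := by
  have hset : {y : ℝ | |c + σ * y| ≤ κ} = Set.Icc ((-κ - c)/σ) ((κ - c)/σ) := by
    ext y
    simp only [Set.mem_setOf_eq, Set.mem_Icc, abs_le, div_le_iff₀ hσ, le_div_iff₀ hσ]
    constructor
    · rintro ⟨h1, h2⟩; constructor <;> nlinarith
    · rintro ⟨h1, h2⟩; constructor <;> nlinarith
  have hab : (-κ - c)/σ ≤ (κ - c)/σ := by gcongr; linarith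
  rw [hset, gaussianReal_apply_eq_integral 0 (by norm_num) _,
    ENNReal.toReal_ofReal (integral_nonneg fun x => gaussianPDFReal_nonneg _ _ _),
    integral_Icc_eq_integral_Ioc, intervalIntegral.integral_of_le hab]

/-- inner integral -/
noncomputable def qg (κ t x : ℝ) : ℝ :=
  ∫ u in ((-κ - t*x)/Real.sqrt (1-t^2))..((κ - t*x)/Real.sqrt (1-t^2)), gaussianPDFReal 0 1 u

noncomputable def qF (κ t x : ℝ) : ℝ := qg κ t x * gaussianPDFReal 0 1 x

noncomputable def qF' (κ t x : ℝ) : ℝ :=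
  ((gaussianPDFReal 0 1 ((κ - t*x)/Real.sqrt (1-t^2)) * (t*κ - x)
    + gaussianPDFReal 0 1 ((-κ - t*x)/Real.sqrt (1-t^2)) * (t*κ + x))
    / (Real.sqrt (1-t^2))^3) * gaussianPDFReal 0 1 x

noncomputable def qΨ (κ t x : ℝ) : ℝ :=
  (Real.exp (-(x - t*κ)^2/(2*(1-t^2))) - Real.exp (-(x + t*κ)^2/(2*(1-t^2))))
    * (Real.exp (-κ^2/2) / (2*π*Real.sqrt (1-t^2)))

lemma qg_cont (κ t : ℝ) : Continuous (fun x => qg κ t x) := by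
  have hG : Continuous (fun z => ∫ u in (0:ℝ)..z, gaussianPDFReal 0 1 u) :=
    intervalIntegral.continuous_primitive (fun a b => pdf_intInt a b) 0
  have h1 : ∀ x, qg κ t x = (∫ u in (0:ℝ)..((κ - t*x)/Real.sqrt (1-t^2)), gaussianPDFReal 0 1 u)
      - ∫ u in (0:ℝ)..((-κ - t*x)/Real.sqrt (1-t^2)), gaussianPDFReal 0 1 u := by
    intro x
    rw [intervalIntegral.integral_interval_sub_left (pdf_intInt _ _) (pdf_intInt _ _)]
    rfl
  simp only [h1]
  fun_prop

lemma qF_cont (κ t : ℝ) : Continuous (fun x => qF κ t x) := by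
  have := qg_cont κ t
  have h2 := pdf_cont
  unfold qF; fun_prop

lemma qF'_cont (κ t : ℝ) : Continuous (fun x => qF' κ t x) := by
  have := pdf_cont
  unfold qF'
  fun_prop

lemma qg_nonneg {κ t : ℝ} (hκ : 0 ≤ κ) (ht : -1 < t ∧ t < 1) (x : ℝ) : 0 ≤ qg κ t x := by
  have hσ : 0 < Real.sqrt (1 - t^2) := Real.sqrt_pos.2 (by nlinarith [ht.1, ht.2])
  rw [qg, ← sliceA hκ hσ]
  exact ENNReal.toReal_nonneg

lemma qg_le_one {κ t : ℝ} (hκ : 0 ≤ κ) (ht : -1 < t ∧ t < 1) (x : ℝ) : qg κ t x ≤ 1 := by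
  have hσ : 0 < Real.sqrt (1 - t^2) := Real.sqrt_pos.2 (by nlinarith [ht.1, ht.2])
  rw [qg, ← sliceA hκ hσ]
  exact ENNReal.toReal_le_of_le_ofReal zero_le_one (by simpa using prob_le_one)

lemma qGauss_repr {κ t : ℝ} (hκ : 0 ≤ κ) (ht : -1 < t ∧ t < 1) :
    qGauss κ t = ∫ x in (-κ)..κ, qF κ t x := by
  set σ := Real.sqrt (1 - t^2) with hσdef
  have hσ : 0 < σ := Real.sqrt_pos.2 (by nlinarith [ht.1, ht.2])
  have hS : MeasurableSet {p : ℝ × ℝ | |p.1| ≤ κ ∧ |t * p.1 + σ * p.2| ≤ κ} := by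
    apply MeasurableSet.inter
    · exact measurableSet_le (measurable_fst.abs) measurable_const
    · exact measurableSet_le ((measurable_fst.const_mul t |>.add
        (measurable_snd.const_mul σ)).abs) measurable_const
  have hslice : ∀ x : ℝ, (gaussianReal 0 1) (Prod.mk x ⁻¹' {p : ℝ × ℝ | |p.1| ≤ κ ∧ |t * p.1 + σ * p.2| ≤ κ})
      = Set.indicator (Set.Icc (-κ) κ) (fun x => ENNReal.ofReal (qg κ t x)) x := by
    intro x
    by_cases hx : |x| ≤ κ
    · have hxm : x ∈ Set.Icc (-κ) κ := by
        rw [Set.mem_Icc]; constructor <;> [linarith [abs_le.1 hx]; linarith [abs_le.1 hx]]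
      rw [Set.indicator_of_mem hxm]
      have : Prod.mk x ⁻¹' {p : ℝ × ℝ | |p.1| ≤ κ ∧ |t * p.1 + σ * p.2| ≤ κ}
          = {y : ℝ | |t * x + σ * y| ≤ κ} := by
        ext y; simp [Set.mem_preimage, hx]
      rw [this, ← ENNReal.ofReal_toReal (measure_ne_top _ _), sliceA hκ hσ]
      rfl
    · have hxm : x ∉ Set.Icc (-κ) κ := by
        rw [Set.mem_Icc]; intro ⟨h1, h2⟩; exact hx (abs_le.2 ⟨h1, h2⟩)
      rw [Set.indicator_of_notMem hxm]
      have : Prod.mk x ⁻¹' {p : ℝ × ℝ | |p.1| ≤ κ ∧ |t * p.1 + σ * p.2| ≤ κ} = ∅ := by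
        ext y; simp [Set.mem_preimage, hx]
      simp [this]
  have hInt : Integrable (fun x => qg κ t x) ((gaussianReal 0 1).restrict (Set.Icc (-κ) κ)) := by
    refine Integrable.mono' (integrable_const 1) ((qg_cont κ t).aestronglyMeasurable) ?_
    filter_upwards with x
    rw [Real.norm_eq_abs, abs_of_nonneg (qg_nonneg hκ ht x)]
    exact qg_le_one hκ ht x
  calc qGauss κ t
      = (∫⁻ x, (gaussianReal 0 1) (Prod.mk x ⁻¹' {p : ℝ × ℝ | |p.1| ≤ κ ∧ |t * p.1 + σ * p.2| ≤ κ}) ∂(gaussianReal 0 1)).toReal := by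
        rw [qGauss, Measure.prod_apply hS]
    _ = (∫⁻ x in Set.Icc (-κ) κ, ENNReal.ofReal (qg κ t x) ∂(gaussianReal 0 1)).toReal := by
        simp_rw [hslice]
        rw [lintegral_indicator measurableSet_Icc]
    _ = (ENNReal.ofReal (∫ x in Set.Icc (-κ) κ, qg κ t x ∂(gaussianReal 0 1))).toReal := by
        rw [ofReal_integral_eq_lintegral_ofReal hInt
          (Filter.Eventually.of_forall fun x => qg_nonneg hκ ht x)]
    _ = ∫ x in Set.Icc (-κ) κ, qg κ t x ∂(gaussianReal 0 1) := by
        rw [ENNReal.toReal_ofReal (integral_nonneg fun x => qg_nonneg hκ ht x)]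
    _ = ∫ x in Set.Icc (-κ) κ, qF κ t x := by
        rw [gaussianReal_of_var_ne_zero 0 (one_ne_zero)]
        have hpdf : (gaussianPDF 0 1) = fun x => (((gaussianPDFReal 0 1 x).toNNReal : NNReal) : ENNReal) := rfl
        rw [hpdf, setIntegral_withDensity_eq_setIntegral_smul
          ((measurable_gaussianPDFReal 0 1).real_toNNReal) _ measurableSet_Icc]
        congr 1
        funext x
        rw [qF, NNReal.smul_def, Real.coe_toNNReal _ (gaussianPDFReal_nonneg 0 1 x), smul_eq_mul, mul_comm]
    _ = ∫ x in (-κ)..κ, qF κ t x := by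
        rw [intervalIntegral.integral_of_le (by linarith), integral_Icc_eq_integral_Ioc]

lemma endpoint_deriv {t x d : ℝ} (h1t : 0 < 1 - t^2) :
    HasDerivAt (fun s => (d - s*x)/Real.sqrt (1-s^2))
      ((t*d - x)/(Real.sqrt (1-t^2))^3) t := by
  have hσ : 0 < Real.sqrt (1 - t^2) := Real.sqrt_pos.2 h1t
  have hsq : Real.sqrt (1 - t^2) ^ 2 = 1 - t^2 := Real.sq_sqrt h1t.le
  have hnum : HasDerivAt (fun s : ℝ => d - s*x) (-x) t := by
    simpa using ((hasDerivAt_id t).mul_const x).const_sub d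
  have hinner : HasDerivAt (fun s : ℝ => 1 - s^2) (-(2*t)) t := by
    simpa using ((hasDerivAt_pow 2 t)).const_sub 1
  have hden : HasDerivAt (fun s => Real.sqrt (1 - s^2)) (-t/Real.sqrt (1-t^2)) t := by
    have := (Real.hasDerivAt_sqrt (by positivity : (1:ℝ) - t^2 ≠ 0)).comp t hinner
    refine this.congr_deriv (Eq.symm ?_)
    field_simp
  have := hnum.div hden hσ.ne'
  refine this.congr_deriv (Eq.symm ?_)
  have h1 : -x * Real.sqrt (1-t^2) - (d - t*x) * (-t/Real.sqrt (1-t^2))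
      = (t*d - x)/Real.sqrt (1-t^2) := by
    field_simp
    linear_combination (-x) * hsq
  rw [h1, div_div, pow_succ, pow_two]
  ring_nf

lemma qF_hasDeriv (κ x : ℝ) {t : ℝ} (h1t : 0 < 1 - t^2) :
    HasDerivAt (fun s => qF κ s x) (qF' κ t x) t := by
  have hσ : 0 < Real.sqrt (1 - t^2) := Real.sqrt_pos.2 h1t
  have hG : ∀ z : ℝ, HasDerivAt (fun w => ∫ u in (0:ℝ)..w, gaussianPDFReal 0 1 u)
      (gaussianPDFReal 0 1 z) z := fun z =>
    intervalIntegral.integral_hasDerivAt_right (pdf_intInt 0 z)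
      (pdf_cont.stronglyMeasurable.stronglyMeasurableAtFilter)
      pdf_cont.continuousAt
  have hb := endpoint_deriv (d := κ) (x := x) h1t
  have ha := endpoint_deriv (d := -κ) (x := x) h1t
  have hqg : ∀ s : ℝ, qg κ s x
      = (∫ u in (0:ℝ)..((κ - s*x)/Real.sqrt (1-s^2)), gaussianPDFReal 0 1 u)
        - ∫ u in (0:ℝ)..((-κ - s*x)/Real.sqrt (1-s^2)), gaussianPDFReal 0 1 u := by
    intro s
    rw [intervalIntegral.integral_interval_sub_left (pdf_intInt _ _) (pdf_intInt _ _), qg]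
  have hqg' : HasDerivAt (fun s => qg κ s x)
      (gaussianPDFReal 0 1 ((κ - t*x)/Real.sqrt (1-t^2)) * ((t*κ - x)/(Real.sqrt (1-t^2))^3)
        - gaussianPDFReal 0 1 ((-κ - t*x)/Real.sqrt (1-t^2)) * ((t*(-κ) - x)/(Real.sqrt (1-t^2))^3)) t := by
    have h1 := (hG ((κ - t*x)/Real.sqrt (1-t^2))).comp t hb
    have h2 := (hG ((-κ - t*x)/Real.sqrt (1-t^2))).comp t ha
    have h3 := h1.sub h2
    simp only [Function.comp_def] at h3
    have hfun : (fun s => qg κ s x) = fun s =>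
        (∫ u in (0:ℝ)..((κ - s*x)/Real.sqrt (1-s^2)), gaussianPDFReal 0 1 u)
          - ∫ u in (0:ℝ)..((-κ - s*x)/Real.sqrt (1-s^2)), gaussianPDFReal 0 1 u := funext hqg
    rw [hfun]
    exact h3
  have := hqg'.mul_const (gaussianPDFReal 0 1 x)
  refine this.congr_deriv (Eq.symm ?_)
  unfold qF'
  ring

/-- key product identity -/
lemma pdf_prod {t : ℝ} (x d : ℝ) (h1t : 0 < 1 - t^2) :
    gaussianPDFReal 0 1 x * gaussianPDFReal 0 1 ((d - t*x)/Real.sqrt (1-t^2))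
      = (2*π)⁻¹ * Real.exp (-(x - t*d)^2/(2*(1-t^2))) * Real.exp (-d^2/2) := by
  have hsq : Real.sqrt (1 - t^2) ^ 2 = 1 - t^2 := Real.sq_sqrt h1t.le
  have h2π : Real.sqrt (2*π) * Real.sqrt (2*π) = 2*π :=
    Real.mul_self_sqrt (by positivity)
  rw [pdf_eq, pdf_eq]
  have hc : ((Real.sqrt (2*π))⁻¹ : ℝ) * (Real.sqrt (2*π))⁻¹ = (2*π)⁻¹ := by
    rw [← mul_inv, h2π]
  have hexp : -x^2/2 + -(((d - t*x)/Real.sqrt (1-t^2))^2)/2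
      = -(x - t*d)^2/(2*(1-t^2)) + -d^2/2 := by
    rw [div_pow, hsq]
    field_simp
    ring
  calc (Real.sqrt (2*π))⁻¹ * Real.exp (-x^2/2) * ((Real.sqrt (2*π))⁻¹ * Real.exp (-((d - t*x)/Real.sqrt (1-t^2))^2/2))
      = ((Real.sqrt (2*π))⁻¹ * (Real.sqrt (2*π))⁻¹) * Real.exp (-x^2/2 + -((d - t*x)/Real.sqrt (1-t^2))^2/2) := by
        rw [Real.exp_add]; ring
    _ = (2*π)⁻¹ * Real.exp (-(x - t*d)^2/(2*(1-t^2)) + -d^2/2) := by rw [hc, hexp]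
    _ = (2*π)⁻¹ * Real.exp (-(x - t*d)^2/(2*(1-t^2))) * Real.exp (-d^2/2) := by
        rw [Real.exp_add]; ring

lemma qΨ_hasDeriv (κ : ℝ) {t : ℝ} (h1t : 0 < 1 - t^2) (x : ℝ) :
    HasDerivAt (fun y => qΨ κ t y) (qF' κ t x) x := by
  have hσ : 0 < Real.sqrt (1 - t^2) := Real.sqrt_pos.2 h1t
  have h1 : HasDerivAt (fun y : ℝ => Real.exp (-(y - t*κ)^2/(2*(1-t^2))))
      (-(x - t*κ)/(1-t^2) * Real.exp (-(x - t*κ)^2/(2*(1-t^2)))) x := by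
    have hin : HasDerivAt (fun y : ℝ => -(y - t*κ)^2/(2*(1-t^2)))
        (-(x - t*κ)/(1-t^2)) x := by
      have : HasDerivAt (fun y : ℝ => (y - t*κ)^2) (2*(x - t*κ)) x := by
        exact (((hasDerivAt_id x).sub_const (t*κ)).pow 2).congr_deriv (by simp)
      have := (this.neg).div_const (2*(1-t^2))
      refine this.congr_deriv (Eq.symm ?_)
      field_simp
    simpa [mul_comm] using hin.exp
  have h2 : HasDerivAt (fun y : ℝ => Real.exp (-(y + t*κ)^2/(2*(1-t^2))))
      (-(x + t*κ)/(1-t^2) * Real.exp (-(x + t*κ)^2/(2*(1-t^2)))) x := by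
    have hin : HasDerivAt (fun y : ℝ => -(y + t*κ)^2/(2*(1-t^2)))
        (-(x + t*κ)/(1-t^2)) x := by
      have : HasDerivAt (fun y : ℝ => (y + t*κ)^2) (2*(x + t*κ)) x := by
        exact (((hasDerivAt_id x).add_const (t*κ)).pow 2).congr_deriv (by simp)
      have := (this.neg).div_const (2*(1-t^2))
      refine this.congr_deriv (Eq.symm ?_)
      field_simp
    simpa [mul_comm] using hin.exp
  have h3 := (h1.sub h2).mul_const (Real.exp (-κ^2/2) / (2*π*Real.sqrt (1-t^2)))
  refine h3.congr_deriv (Eq.symm ?_)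
  unfold qF'
  have e1 : gaussianPDFReal 0 1 x * gaussianPDFReal 0 1 ((κ - t*x)/Real.sqrt (1-t^2))
      = (2*π)⁻¹ * Real.exp (-(x - t*κ)^2/(2*(1-t^2))) * Real.exp (-κ^2/2) := by
    simpa using pdf_prod x κ h1t
  have e2 : gaussianPDFReal 0 1 x * gaussianPDFReal 0 1 ((-κ - t*x)/Real.sqrt (1-t^2))
      = (2*π)⁻¹ * Real.exp (-(x + t*κ)^2/(2*(1-t^2))) * Real.exp (-κ^2/2) := by
    have := pdf_prod x (-κ) h1t
    rw [show x - t*(-κ) = x + t*κ from by ring, show (-κ:ℝ)^2 = κ^2 from by ring] at this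
    simpa using this
  set σ := Real.sqrt (1-t^2) with hσdef
  have hinv : (1 - t^2) = σ^2 := (Real.sq_sqrt h1t.le).symm
  rw [hinv] at e1 e2 ⊢
  linear_combination ((t*κ - x)/(σ^2 * σ)) * e1 + ((t*κ + x)/(σ^2 * σ)) * e2

lemma integral_qF'_nonneg {κ t : ℝ} (ht0 : 0 ≤ t) (h1t : 0 < 1 - t^2) :
    0 ≤ ∫ x in (-κ)..κ, qF' κ t x := by
  rw [intervalIntegral.integral_eq_sub_of_hasDerivAt
    (fun x _ => qΨ_hasDeriv κ h1t x) ((qF'_cont κ t).intervalIntegrable _ _)]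
  unfold qΨ
  rw [show ((-κ:ℝ) - t*κ)^2 = (κ + t*κ)^2 from by ring,
    show ((-κ:ℝ) + t*κ)^2 = (κ - t*κ)^2 from by ring]
  have hσ : 0 < Real.sqrt (1 - t^2) := Real.sqrt_pos.2 h1t
  have hc : 0 ≤ Real.exp (-κ^2/2) / (2*π*Real.sqrt (1-t^2)) := by positivity
  have hE : Real.exp (-(κ + t*κ)^2/(2*(1-t^2))) ≤ Real.exp (-(κ - t*κ)^2/(2*(1-t^2))) := by
    apply Real.exp_le_exp.2
    apply div_le_div_of_nonneg_right ?_ ?_ |>.trans_eq rfl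
    · nlinarith
    · linarith
  nlinarith [hE, hc]

lemma qF'_bound {κ : ℝ} (hκ : 0 ≤ κ) {m s x : ℝ} (hm1 : m < 1) (hsm : |s| < m)
    (hx : |x| ≤ κ) : ‖qF' κ s x‖ ≤ 4*κ/(Real.sqrt (1-m^2))^3 := by
  have hm0 : 0 ≤ m := (abs_nonneg s).trans hsm.le
  have h1m : 0 < 1 - m^2 := by nlinarith
  have hσm : 0 < Real.sqrt (1-m^2) := Real.sqrt_pos.2 h1m
  have hs2 : s^2 ≤ m^2 := by nlinarith [sq_abs s, abs_nonneg s]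
  have h1s : 0 < 1 - s^2 := by nlinarith
  have hσs : 0 < Real.sqrt (1-s^2) := Real.sqrt_pos.2 h1s
  have hσle : Real.sqrt (1-m^2) ≤ Real.sqrt (1-s^2) := Real.sqrt_le_sqrt (by nlinarith)
  have hs1 : |s| ≤ 1 := hsm.le.trans hm1.le
  have habs1 : |s*κ - x| ≤ 2*κ := by
    have : |s*κ| ≤ κ := by
      rw [abs_mul, abs_of_nonneg hκ]
      nlinarith [abs_nonneg s]
    calc |s*κ - x| ≤ |s*κ| + |x| := abs_sub _ _
      _ ≤ κ + κ := add_le_add this hx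
      _ = 2*κ := by ring
  have habs2 : |s*κ + x| ≤ 2*κ := by
    have : |s*κ| ≤ κ := by
      rw [abs_mul, abs_of_nonneg hκ]
      nlinarith [abs_nonneg s]
    calc |s*κ + x| ≤ |s*κ| + |x| := abs_add_le _ _
      _ ≤ κ + κ := add_le_add this hx
      _ = 2*κ := by ring
  have hnum : |gaussianPDFReal 0 1 ((κ - s*x)/Real.sqrt (1-s^2)) * (s*κ - x)
      + gaussianPDFReal 0 1 ((-κ - s*x)/Real.sqrt (1-s^2)) * (s*κ + x)| ≤ 4*κ := by
    calc |gaussianPDFReal 0 1 ((κ - s*x)/Real.sqrt (1-s^2)) * (s*κ - x)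
        + gaussianPDFReal 0 1 ((-κ - s*x)/Real.sqrt (1-s^2)) * (s*κ + x)|
        ≤ |gaussianPDFReal 0 1 ((κ - s*x)/Real.sqrt (1-s^2)) * (s*κ - x)|
          + |gaussianPDFReal 0 1 ((-κ - s*x)/Real.sqrt (1-s^2)) * (s*κ + x)| := abs_add_le _ _
      _ ≤ 1 * (2*κ) + 1 * (2*κ) := by
          apply add_le_add <;>
          · rw [abs_mul]
            apply mul_le_mul _ (by assumption) (abs_nonneg _) zero_le_one
            rw [abs_of_nonneg (gaussianPDFReal_nonneg 0 1 _)]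
            exact pdf_le_one _
      _ = 4*κ := by ring
  rw [qF', Real.norm_eq_abs, abs_mul, abs_div, abs_of_nonneg (gaussianPDFReal_nonneg 0 1 x),
    abs_of_nonneg (by positivity : (0:ℝ) ≤ (Real.sqrt (1-s^2))^3)]
  calc _ ≤ (4*κ/(Real.sqrt (1-m^2))^3) * 1 := by
        apply mul_le_mul _ (pdf_le_one x) (gaussianPDFReal_nonneg 0 1 x) (by positivity)
        exact div_le_div₀ (by positivity) hnum (by positivity) (by gcongr)
    _ = 4*κ/(Real.sqrt (1-m^2))^3 := by ring

lemma qGauss_hasDeriv {κ : ℝ} (hκ : 0 ≤ κ) {t₀ : ℝ} (ht : -1 < t₀ ∧ t₀ < 1) :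
    HasDerivAt (qGauss κ) (∫ x in (-κ)..κ, qF' κ t₀ x) t₀ := by
  set m : ℝ := (1 + |t₀|)/2 with hm
  have ht₀ : |t₀| < 1 := abs_lt.2 ht
  have hm1 : m < 1 := by rw [hm]; linarith
  have hmt : |t₀| < m := by rw [hm]; linarith
  set ε : ℝ := m - |t₀| with hε
  have hε0 : 0 < ε := by rw [hε]; linarith
  have hball : ∀ s ∈ Metric.ball t₀ ε, |s| < m := by
    intro s hs
    rw [Metric.mem_ball, Real.dist_eq] at hs
    calc |s| = |s - t₀ + t₀| := by ring_nf
      _ ≤ |s - t₀| + |t₀| := abs_add_le _ _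
      _ < ε + |t₀| := by linarith
      _ = m := by rw [hε]; ring
  have key := hasDerivAt_integral_of_dominated_loc_of_deriv_le (F := fun s x => qF κ s x)
    (F' := fun s x => qF' κ s x) (x₀ := t₀) (a := -κ) (b := κ)
    (bound := fun _ => 4*κ/(Real.sqrt (1-m^2))^3) (Metric.ball_mem_nhds t₀ hε0)
    (Filter.Eventually.of_forall fun s => (qF_cont κ s).aestronglyMeasurable)
    ((qF_cont κ t₀).intervalIntegrable _ _)
    ((qF'_cont κ t₀).aestronglyMeasurable)
    ?_ (intervalIntegrable_const (μ := volume)) ?_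
  · have heq : (fun s => ∫ x in (-κ)..κ, qF κ s x) =ᶠ[nhds t₀] qGauss κ := by
      have hopen : Set.Ioo (-1:ℝ) 1 ∈ nhds t₀ := (isOpen_Ioo).mem_nhds (Set.mem_Ioo.2 ht)
      filter_upwards [hopen] with s hs
      exact (qGauss_repr hκ ⟨hs.1, hs.2⟩).symm
    exact key.2.congr_of_eventuallyEq heq.symm
  · apply Filter.Eventually.of_forall
    intro x hx s hs
    have hxκ : |x| ≤ κ := by
      rw [Set.uIoc_of_le (by linarith : -κ ≤ κ)] at hx
      exact abs_le.2 ⟨hx.1.le, hx.2⟩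
    exact qF'_bound hκ hm1 (hball s hs) hxκ
  · apply Filter.Eventually.of_forall
    intro x hx s hs
    have hsm := hball s hs
    have h1s : 0 < 1 - s^2 := by nlinarith [sq_abs s, abs_nonneg s]
    exact qF_hasDeriv κ x h1s

end QGaussAux

/-- For `κ > 0`, the map `t ↦ q_κ(t)` is non-decreasing on `[0,1)`. -/
theorem stmt3 (κ : ℝ) (hκ : 0 < κ) : MonotoneOn (qGauss κ) (Set.Ico (0 : ℝ) 1) := by
  have hderiv : ∀ t ∈ Set.Ico (0:ℝ) 1,
      HasDerivAt (qGauss κ) (∫ x in (-κ)..κ, QGaussAux.qF' κ t x) t := by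
    intro t ht
    exact QGaussAux.qGauss_hasDeriv hκ.le ⟨by linarith [ht.1], ht.2⟩
  apply monotoneOn_of_deriv_nonneg (convex_Ico 0 1)
  · intro t ht
    exact ((hderiv t ht).continuousAt).continuousWithinAt
  · rw [interior_Ico]
    intro t ht
    exact ((hderiv t ⟨ht.1.le, ht.2⟩).differentiableAt).differentiableWithinAt
  · rw [interior_Ico]
    intro t ht
    rw [(hderiv t ⟨ht.1.le, ht.2⟩).deriv]
    exact QGaussAux.integral_qF'_nonneg ht.1.le (by nlinarith [ht.1, ht.2])
end
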